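/- Let P(k), k ≥ 0, be nonnegative sub-stochastic matrices with single-step influence indicators α(k) = ξ - P(k)ξ, and suppose the diagonal entries satisfy p_{ii}(k) ≥ w_i(k)/w_i(k+1) for positive nondecreasing weights w_i. Then for all t > s ≥ 0, the multi-step indicator satisfies the entrywise inequality α_i(t:s) ≥ (w_i(s)/w_i(t))·∑_{k=s}^{t-1} α_i(k) for every i. -/

import Mathlib

/-- The backward product `P(t:k) = P(t-1) ⋯ P(k)`, with `P(k:k) = I` (and `= I` also if `t ≤ k`). -/
def backProd {m : ℕ} (P : ℕ → Matrix (Fin m) (Fin m) ℝ) (k : ℕ) :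
    ℕ → Matrix (Fin m) (Fin m) ℝ
  | 0 => 1
  | t + 1 => if t + 1 ≤ k then 1 else P t * backProd P k t

/-- Lemma 1: entrywise lower bound on the multi-step influence indicator,
`α_i(t:s) ≥ (w_i(s)/w_i(t)) ∑_{k=s}^{t-1} α_i(k)`. -/
theorem stmt_5 (m : ℕ) (P : ℕ → Matrix (Fin m) (Fin m) ℝ)
    (hnonneg : ∀ k i j, 0 ≤ P k i j)
    (hsub : ∀ k i, ∑ j, P k i j ≤ 1)
    (w : Fin m → ℕ → ℝ)
    (hwpos : ∀ i k, 0 < w i k)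
    (hwmono : ∀ i, Monotone (w i))
    (hdiag : ∀ k i, P k i i ≥ w i k / w i (k + 1))
    (ξ : Fin m → ℝ) (hξ : ξ = fun _ => 1)
    (α : ℕ → Fin m → ℝ) (hα : ∀ k, α k = ξ - (P k).mulVec ξ)
    (s t : ℕ) (hst : s < t) :
    ∀ i, (ξ - (backProd P s t).mulVec ξ) i ≥
      (w i s / w i t) * ∑ k ∈ Finset.Ico s t, α k i := by
  subst hξ
  have hαval : ∀ k i, α k i = 1 - ∑ j, P k i j := by
    intro k i
    rw [hα]
    simp [Matrix.mulVec, dotProduct]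
  have hαnn : ∀ k i, 0 ≤ α k i := by
    intro k i
    rw [hαval]
    linarith [hsub k i]
  have hself : ∀ u, u ≤ s → backProd P s u = 1 := by
    intro u hu
    cases u with
    | zero => rfl
    | succ v => simp [backProd, hu]
  suffices H : ∀ t, s ≤ t → ∀ i,
      (((fun _ => (1:ℝ)) : Fin m → ℝ) - (backProd P s t).mulVec (fun _ => 1)) i ≥
        (w i s / w i t) * ∑ k ∈ Finset.Ico s t, α k i by
    exact H t hst.le
  intro t hts
  induction t, hts using Nat.le_induction with
  | base =>
    intro i
    simp [hself s le_rfl, Matrix.one_mulVec]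
  | succ t hts ih =>
    intro i
    have hstep : backProd P s (t + 1) = P t * backProd P s t := by
      have : ¬ (t + 1 ≤ s) := by omega
      simp [backProd, this]
    -- notation
    set u : Fin m → ℝ := (backProd P s t).mulVec (fun _ => 1) with hu
    have hSnn : 0 ≤ ∑ k ∈ Finset.Ico s t, α k i :=
      Finset.sum_nonneg fun k _ => hαnn k i
    have hvnn : ∀ j, 0 ≤ 1 - u j := by
      intro j
      have := ih j
      have hS : 0 ≤ ∑ k ∈ Finset.Ico s t, α k j :=
        Finset.sum_nonneg fun k _ => hαnn k j
      have hq : 0 ≤ w j s / w j t := le_of_lt (div_pos (hwpos j s) (hwpos j t))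
      have : (0:ℝ) ≤ (((fun _ => (1:ℝ)) : Fin m → ℝ) - u) j := le_trans (mul_nonneg hq hS) this
      simpa using this
    -- rewrite LHS
    have hLHS : (((fun _ => (1:ℝ)) : Fin m → ℝ) - (backProd P s (t+1)).mulVec (fun _ => 1)) i
        = α t i + ∑ j, P t i j * (1 - u j) := by
      rw [hstep, ← Matrix.mulVec_mulVec]
      have h1 : ((P t).mulVec u) i = ∑ j, P t i j * u j := by
        simp [Matrix.mulVec, dotProduct]
      have h2 : ∑ j, P t i j * (1 - u j) = (∑ j, P t i j) - ∑ j, P t i j * u j := by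
        rw [← Finset.sum_sub_distrib]
        congr 1; ext j; ring
      simp only [Pi.sub_apply, ← hu, h1, h2, hαval t i]
      ring
    rw [hLHS]
    -- bound the sum from below by the diagonal term
    have hsum_ge : ∑ j, P t i j * (1 - u j) ≥ P t i i * (1 - u i) := by
      apply Finset.single_le_sum (f := fun j => P t i j * (1 - u j))
      · intro j _
        exact mul_nonneg (hnonneg t i j) (hvnn j)
      · exact Finset.mem_univ i
    have hdiag_ge : P t i i * (1 - u i) ≥ (w i t / w i (t+1)) * (1 - u i) :=
      mul_le_mul_of_nonneg_right (hdiag t i) (hvnn i)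
    have hX : ∑ j, P t i j * (1 - u j) ≥ (w i t / w i (t+1)) * (1 - u i) :=
      le_trans hdiag_ge hsum_ge
    have hvi : (1 - u i) ≥ (w i s / w i t) * ∑ k ∈ Finset.Ico s t, α k i := by
      have := ih i
      simpa using this
    -- positivity facts
    have ha : 0 < w i s := hwpos i s
    have hb : 0 < w i t := hwpos i t
    have hc : 0 < w i (t+1) := hwpos i (t+1)
    have hac : w i s ≤ w i (t+1) := hwmono i (by omega)
    set S := ∑ k ∈ Finset.Ico s t, α k i with hS
    rw [Finset.sum_Ico_succ_top hts]
    set X := ∑ j, P t i j * (1 - u j) with hXdef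
    set v := 1 - u i with hv
    -- clear denominators
    have hbv : w i s * S ≤ v * w i t := by
      rw [ge_iff_le, div_mul_eq_mul_div, div_le_iff₀ hb] at hvi
      exact hvi
    have hcX : w i t / w i (t+1) * v ≤ X := hX
    have hcX' : w i t * v ≤ X * w i (t+1) := by
      rw [div_mul_eq_mul_div, div_le_iff₀ hc] at hcX
      exact hcX
    have hαt : 0 ≤ α t i := hαnn t i
    rw [ge_iff_le, div_mul_eq_mul_div, div_le_iff₀ hc]
    have hvnn' : 0 ≤ v := hvnn i
    nlinarith [mul_le_mul_of_nonneg_right hac hαt, mul_nonneg hvnn' (le_of_lt hb),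
      mul_le_mul_of_nonneg_left hbv (le_of_lt hb)]
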